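/- Fix integers m ≥ 1, M ≥ 2, γ ≥ 4, and κ ≥ 4, and set w₁ = C(γ,2)C(κ,2), w₂ = 3C(γ,2)C(κ,3) + 3C(γ,3)C(κ,2), w₃ = 18C(γ,3)C(κ,3), and w₄ = 6C(γ,2)C(κ,4) + 6C(γ,4)C(κ,2) + 36C(γ,3)C(κ,4) + 36C(γ,4)C(κ,3) + 72C(γ,4)C(κ,4). Define N₈ : ((Fin (m+1) × Fin M) → ℝ) → ℝ by N₈(p) = Σ_{b ∈ ℤ, M ∣ b} { w₁[f_{p,2}² · f_{p,−2}²]_{(0,b)} + w₂[f_{p,2} · f_{p,−2} · f_p² · f̄_p²]_{(0,b)} + w₃[f_{p,2} · f_p² · f̄_p⁴]_{(0,b)} + w₄[f_p⁴ · f̄_p⁴]_{(0,b)} }. Then N₈ is differentiable at every p, and for all i ∈ {0,…,m} and j ∈ {0,…,M−1} (with j cast to ℤ), the partial derivative of N₈ with respect to the coordinate p(i,j) equals Σ_{b ∈ ℤ, M ∣ b} { 4w₁[f_{p,2}² · f_{p,−2}]_{(2i, b+2j)} + 2w₂[f_{p,2} · f_p² · f̄_p²]_{(2i, b+2j)} +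 4w₂[f_{p,2} · f_{p,−2} · f_p² · f̄_p]_{(i, b+j)} + w₃[f_p² · f̄_p⁴]_{(−2i, b−2j)} + 2w₃[f_{p,2} · f_p · f̄_p⁴]_{(−i, b−j)} + 4w₃[f_{p,2} · f_p² · f̄_p³]_{(i, b+j)} + 8w₄[f_p⁴ · f̄_p³]_{(i, b+j)} }. -/

import Mathlib

/-- `f_{p,a}`: the Laurent polynomial `Σ_{i,j} p(i,j) X^{a·i} Y^{a·j}` in
`AddMonoidAlgebra ℝ (ℤ × ℤ)`; `fpa p 1 = f_p`, `fpa p (-1) = f̄_p`, and `fpa p 2`,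
`fpa p (-2)` correspond to `f(X²,Y²)`, `f(X⁻²,Y⁻²)`. -/
noncomputable def fpa {m M : ℕ} (p : Fin (m + 1) × Fin M → ℝ) (a : ℤ) :
    AddMonoidAlgebra ℝ (ℤ × ℤ) :=
  ∑ ij : Fin (m + 1) × Fin M,
    AddMonoidAlgebra.single (a * (ij.1 : ℤ), a * (ij.2 : ℤ)) (p ij)

namespace Stmt11Aux

variable {m M : ℕ}

noncomputable def cf (as : List ℤ) (x : ℤ × ℤ) (p : Fin (m + 1) × Fin M → ℝ) : ℝ :=
  ((as.map (fpa p)).prod).coeff x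

lemma cf_nil (x : ℤ × ℤ) (p : Fin (m + 1) × Fin M → ℝ) :
    cf [] x p = if x = 0 then 1 else 0 := by
  simp only [cf, List.map_nil, List.prod_nil]
  rw [AddMonoidAlgebra.one_def, AddMonoidAlgebra.coeff_single, Finsupp.single_apply]
  simp [eq_comm]

lemma cf_cons (a : ℤ) (as : List ℤ) (x : ℤ × ℤ) (p : Fin (m + 1) × Fin M → ℝ) :
    cf (a :: as) x p =
      ∑ ij : Fin (m + 1) × Fin M,
        p ij * cf as (x - (a * (ij.1 : ℤ), a * (ij.2 : ℤ))) p := by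
  simp only [cf, List.map_cons, List.prod_cons]
  rw [fpa, Finset.sum_mul]
  rw [AddMonoidAlgebra.coeff_sum, Finsupp.finset_sum_apply]
  refine Finset.sum_congr rfl fun ij _ => ?_
  rw [AddMonoidAlgebra.coeff_single_mul_apply]
  congr 1
  abel_nf

lemma cf_congr_list {as bs : List ℤ} (x : ℤ × ℤ) (p : Fin (m + 1) × Fin M → ℝ)
    (h : (as.map (fpa p)).prod = (bs.map (fpa p)).prod) : cf as x p = cf bs x p := by
  rw [cf, cf, h]

lemma cf_neg (as : List ℤ) (x : ℤ × ℤ) (p : Fin (m + 1) × Fin M → ℝ) :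
    cf (as.map (fun a => -a)) (-x) p = cf as x p := by
  induction as generalizing x with
  | nil => rw [List.map_nil, cf_nil, cf_nil]; simp [neg_eq_zero]
  | cons a as ih =>
      rw [List.map_cons, cf_cons, cf_cons]
      refine Finset.sum_congr rfl fun ij _ => ?_
      rw [← ih]
      congr 2
      ext <;> simp <;> ring

lemma cf_bound (as : List ℤ) (x : ℤ × ℤ) (p : Fin (m + 1) × Fin M → ℝ)
    (h : ((as.map (fun a => |a|)).sum) * (M : ℤ) < |x.2|) : cf as x p = 0 := by
  induction as generalizing x with
  | nil =>
      rw [cf_nil]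
      simp only [List.map_nil, List.sum_nil, zero_mul] at h
      have : x ≠ 0 := by
        intro hx; rw [hx] at h; simp at h
      simp [this]
  | cons a as ih =>
      rw [cf_cons]
      refine Finset.sum_eq_zero fun ij _ => ?_
      rw [ih]
      · ring
      · simp only [List.map_cons, List.sum_cons] at h
        have hj : (ij.2 : ℤ) ≤ (M : ℤ) := by
          have := ij.2.is_lt
          exact_mod_cast le_of_lt (by exact_mod_cast this)
        have hj0 : (0:ℤ) ≤ (ij.2 : ℤ) := Int.natCast_nonneg _
        have habs : |x.2 - a * (ij.2 : ℤ)| ≥ |x.2| - |a| * (ij.2 : ℤ) := by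
          have := abs_sub_abs_le_abs_sub x.2 (a * (ij.2 : ℤ))
          have h2 : |a * (ij.2 : ℤ)| = |a| * (ij.2 : ℤ) := by
            rw [abs_mul, abs_of_nonneg hj0]
          linarith
        have : |a| * (ij.2 : ℤ) ≤ |a| * (M : ℤ) :=
          mul_le_mul_of_nonneg_left hj (abs_nonneg a)
        simp only [Prod.snd_sub]
        nlinarith [abs_nonneg a]

noncomputable def Dcf : List ℤ → (ℤ × ℤ) → (Fin (m + 1) × Fin M → ℝ) →
    ((Fin (m + 1) × Fin M → ℝ) →L[ℝ] ℝ)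
  | [], _, _ => 0
  | a :: as, x, p =>
      ∑ ij : Fin (m + 1) × Fin M,
        (p ij • Dcf as (x - (a * (ij.1 : ℤ), a * (ij.2 : ℤ))) p +
          cf as (x - (a * (ij.1 : ℤ), a * (ij.2 : ℤ))) p •
            ContinuousLinearMap.proj (R := ℝ) (φ := fun _ : Fin (m+1) × Fin M => ℝ) ij)

lemma hasFDerivAt_cf (as : List ℤ) (x : ℤ × ℤ) (p : Fin (m + 1) × Fin M → ℝ) :
    HasFDerivAt (cf as x) (Dcf as x p) p := by
  induction as generalizing x with
  | nil =>
      have : cf (m := m) (M := M) [] x = fun _ => cf [] x p := by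
        funext q; rw [cf_nil, cf_nil]
      rw [this, Dcf]
      exact hasFDerivAt_const _ _
  | cons a as ih =>
      have : cf (m := m) (M := M) (a :: as) x = fun q =>
          ∑ ij : Fin (m + 1) × Fin M,
            q ij * cf as (x - (a * (ij.1 : ℤ), a * (ij.2 : ℤ))) q := by
        funext q; exact cf_cons a as x q
      rw [this, Dcf]
      exact HasFDerivAt.fun_sum fun ij _ =>
        ((ContinuousLinearMap.proj (R := ℝ) (φ := fun _ : Fin (m+1) × Fin M => ℝ)
            ij).hasFDerivAt.mul (ih _))

lemma Dcf_single (as : List ℤ) (x : ℤ × ℤ) (p : Fin (m + 1) × Fin M → ℝ)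
    (kl : Fin (m + 1) × Fin M) :
    Dcf as x p (Pi.single kl 1) =
      ∑ t ∈ Finset.range as.length,
        cf (as.eraseIdx t)
          (x - (as.getD t 0 * (kl.1 : ℤ), as.getD t 0 * (kl.2 : ℤ))) p := by
  induction as generalizing x with
  | nil => simp [Dcf]
  | cons a as ih =>
      rw [Dcf]
      rw [ContinuousLinearMap.sum_apply]
      simp only [ContinuousLinearMap.add_apply, ContinuousLinearMap.smul_apply,
        ContinuousLinearMap.proj_apply, smul_eq_mul, Finset.sum_add_distrib]
      simp only [List.length_cons]
      rw [Finset.sum_range_succ']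
      simp only [List.eraseIdx_cons_succ, List.eraseIdx_cons_zero,
        List.getD_cons_succ, List.getD_cons_zero]
      congr 1
      · have : ∀ ij : Fin (m + 1) × Fin M,
            p ij * Dcf as (x - (a * (ij.1 : ℤ), a * (ij.2 : ℤ))) p (Pi.single kl 1) =
            ∑ t ∈ Finset.range as.length,
              p ij * cf (as.eraseIdx t)
                ((x - (as.getD t 0 * (kl.1 : ℤ), as.getD t 0 * (kl.2 : ℤ))) -
                  (a * (ij.1 : ℤ), a * (ij.2 : ℤ))) p := by
          intro ij
          rw [ih, Finset.mul_sum]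
          refine Finset.sum_congr rfl fun t _ => ?_
          congr 2
          abel
        simp only [this]
        rw [Finset.sum_comm]
        refine Finset.sum_congr rfl fun t _ => ?_
        rw [← cf_cons]
      · have : ∀ ij : Fin (m + 1) × Fin M,
            cf as (x - (a * (ij.1 : ℤ), a * (ij.2 : ℤ))) p *
              (Pi.single (M := fun _ : Fin (m+1) × Fin M => ℝ) kl 1 ij) =
            if ij = kl then cf as (x - (a * (kl.1 : ℤ), a * (kl.2 : ℤ))) p else 0 := by
          intro ij
          rcases eq_or_ne ij kl with h | h
          · subst h; simp
          · simp [Pi.single_apply, h]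
        simp only [this]
        simp

lemma finsum_dvd_eq_sum (F : ℤ → ℝ) (hF : ∀ b : ℤ, 8 * (M:ℤ) < |b| → F b = 0) :
    (∑ᶠ (b : ℤ) (_ : (M : ℤ) ∣ b), F b) =
      ∑ b ∈ Finset.Icc (-(8 * (M:ℤ))) (8 * (M:ℤ)), if (M : ℤ) ∣ b then F b else 0 := by
  have h1 : (∑ᶠ (b : ℤ) (_ : (M : ℤ) ∣ b), F b) =
      ∑ᶠ (b : ℤ), if (M : ℤ) ∣ b then F b else 0 :=
    finsum_congr fun b => finsum_eq_if
  rw [h1]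
  apply finsum_eq_sum_of_support_subset
  intro b hb
  simp only [Function.mem_support] at hb
  simp only [Finset.coe_Icc, Set.mem_Icc]
  by_contra hc
  push_neg at hc
  have : 8 * (M:ℤ) < |b| := by
    rcases le_or_gt (-(8 * (M:ℤ))) b with h | h
    · have := hc h
      rw [abs_of_pos (by linarith [Int.natCast_nonneg M])]
      exact this
    · rw [abs_of_neg (by linarith [Int.natCast_nonneg M] : b < 0)]
      linarith
  rw [hF b this] at hb
  simp at hb

lemma sum_neg_reindex (f : ℤ → ℝ) :
    (∑ b ∈ Finset.Icc (-(8 * (M:ℤ))) (8 * (M:ℤ)), if (M : ℤ) ∣ b then f (-b) else 0) =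
      ∑ b ∈ Finset.Icc (-(8 * (M:ℤ))) (8 * (M:ℤ)), if (M : ℤ) ∣ b then f b else 0 := by
  refine Finset.sum_nbij' (fun b => -b) (fun b => -b) ?_ ?_ ?_ ?_ ?_ <;>
    intro b hb <;>
    simp only [Finset.mem_Icc, neg_neg] at *
  · omega
  · omega
  · rcases em ((M:ℤ) ∣ b) with h | h
    · rw [if_pos h, if_pos ((dvd_neg).mpr h)]
    · rw [if_neg h, if_neg (fun hc => h ((dvd_neg).mp hc))]

lemma key_reindex (PP QQ : ℤ → ℝ) :
    (∑ b ∈ Finset.Icc (-(8 * (M:ℤ))) (8 * (M:ℤ)),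
        if (M : ℤ) ∣ b then PP b + QQ (-b) else 0) =
      ∑ b ∈ Finset.Icc (-(8 * (M:ℤ))) (8 * (M:ℤ)),
        if (M : ℤ) ∣ b then PP b + QQ b else 0 := by
  have split : ∀ G H : ℤ → ℝ,
      (∑ b ∈ Finset.Icc (-(8 * (M:ℤ))) (8 * (M:ℤ)),
          if (M : ℤ) ∣ b then G b + H b else 0) =
      (∑ b ∈ Finset.Icc (-(8 * (M:ℤ))) (8 * (M:ℤ)), if (M : ℤ) ∣ b then G b else 0) +
      (∑ b ∈ Finset.Icc (-(8 * (M:ℤ))) (8 * (M:ℤ)), if (M : ℤ) ∣ b then H b else 0) := by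
    intro G H
    rw [← Finset.sum_add_distrib]
    refine Finset.sum_congr rfl fun b _ => ?_
    split_ifs <;> simp
  rw [split PP (fun b => QQ (-b)), split PP QQ, sum_neg_reindex QQ]

lemma abs_shift {b s B : ℤ} (h : B + |s| < |b|) : B < |b + s| := by
  have h2 : |b| ≤ |b + s| + |s| := by
    have := abs_add_le (b + s) (-s)
    simp only [add_neg_cancel_right, abs_neg] at this
    exact this
  linarith

lemma abs_shift' {b s B : ℤ} (h : B + |s| < |b|) : B < |b - s| := by
  have := abs_shift (b := b) (s := -s) (B := B) (by simpa using h)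
  simpa [sub_eq_add_neg] using this

lemma cf_flip {as bs : List ℤ} (c d : ℤ) (p : Fin (m + 1) × Fin M → ℝ)
    (h : (as.map (fpa p)).prod = ((bs.map (fun a => -a)).map (fpa p)).prod) :
    cf as (-c, d) p = cf bs (c, -d) p := by
  rw [cf_congr_list _ _ h]
  have := cf_neg bs (c, -d) p
  rw [← this]
  congr 1
  rw [Prod.neg_mk, neg_neg]


lemma cf_flip2 {as bs : List ℤ} (c d e : ℤ) (p : Fin (m + 1) × Fin M → ℝ)
    (h : (as.map (fpa p)).prod = ((bs.map (fun a => -a)).map (fpa p)).prod) :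
    cf as (-c, d - e) p = cf bs (c, -d + e) p := by
  rw [cf_flip c (d - e) p h]
  congr 1
  exact Prod.ext rfl (by ring)

lemma flip1 (c d e : ℤ) (p : Fin (m + 1) × Fin M → ℝ) :
    cf [2,-2,-2] (-c, d - e) p = cf [2,2,-2] (c, -d + e) p :=
  cf_flip2 c d e p (by
    simp only [List.map_cons, List.map_nil, List.prod_cons, List.prod_nil, neg_neg]
    ring)

lemma flip2 (c d e : ℤ) (p : Fin (m + 1) × Fin M → ℝ) :
    cf [-2,1,1,-1,-1] (-c, d - e) p = cf [2,1,1,-1,-1] (c, -d + e) p :=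
  cf_flip2 c d e p (by
    simp only [List.map_cons, List.map_nil, List.prod_cons, List.prod_nil, neg_neg]
    ring)

lemma flip3 (c d e : ℤ) (p : Fin (m + 1) × Fin M → ℝ) :
    cf [2,-2,1,-1,-1] (-c, d - e) p = cf [2,-2,1,1,-1] (c, -d + e) p :=
  cf_flip2 c d e p (by
    simp only [List.map_cons, List.map_nil, List.prod_cons, List.prod_nil, neg_neg]
    ring)

lemma flip4 (c d e : ℤ) (p : Fin (m + 1) × Fin M → ℝ) :
    cf [1,1,1,-1,-1,-1,-1] (-c, d - e) p = cf [1,1,1,1,-1,-1,-1] (c, -d + e) p :=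
  cf_flip2 c d e p (by
    simp only [List.map_cons, List.map_nil, List.prod_cons, List.prod_nil, neg_neg]
    ring)

section coeffs
variable (p : Fin (m + 1) × Fin M → ℝ) (x : ℤ × ℤ)

lemma c1 : ((fpa p 2) ^ 2 * (fpa p (-2)) ^ 2).coeff x = cf [2,2,-2,-2] x p := by
  rw [cf, show (fpa p 2) ^ 2 * (fpa p (-2)) ^ 2 =
    (([2,2,-2,-2] : List ℤ).map (fpa p)).prod by
      simp only [List.map_cons, List.map_nil, List.prod_cons, List.prod_nil]; ring]

lemma c2 : ((fpa p 2) * (fpa p (-2)) * (fpa p 1) ^ 2 * (fpa p (-1)) ^ 2).coeff x =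
    cf [2,-2,1,1,-1,-1] x p := by
  rw [cf, show (fpa p 2) * (fpa p (-2)) * (fpa p 1) ^ 2 * (fpa p (-1)) ^ 2 =
    (([2,-2,1,1,-1,-1] : List ℤ).map (fpa p)).prod by
      simp only [List.map_cons, List.map_nil, List.prod_cons, List.prod_nil]; ring]

lemma c3 : ((fpa p 2) * (fpa p 1) ^ 2 * (fpa p (-1)) ^ 4).coeff x =
    cf [2,1,1,-1,-1,-1,-1] x p := by
  rw [cf, show (fpa p 2) * (fpa p 1) ^ 2 * (fpa p (-1)) ^ 4 =
    (([2,1,1,-1,-1,-1,-1] : List ℤ).map (fpa p)).prod by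
      simp only [List.map_cons, List.map_nil, List.prod_cons, List.prod_nil]; ring]

lemma c4 : ((fpa p 1) ^ 4 * (fpa p (-1)) ^ 4).coeff x = cf [1,1,1,1,-1,-1,-1,-1] x p := by
  rw [cf, show (fpa p 1) ^ 4 * (fpa p (-1)) ^ 4 =
    (([1,1,1,1,-1,-1,-1,-1] : List ℤ).map (fpa p)).prod by
      simp only [List.map_cons, List.map_nil, List.prod_cons, List.prod_nil]; ring]

lemma d1 : ((fpa p 2) ^ 2 * (fpa p (-2))).coeff x = cf [2,2,-2] x p := by
  rw [cf, show (fpa p 2) ^ 2 * (fpa p (-2)) =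
    (([2,2,-2] : List ℤ).map (fpa p)).prod by
      simp only [List.map_cons, List.map_nil, List.prod_cons, List.prod_nil]; ring]

lemma d2 : ((fpa p 2) * (fpa p 1) ^ 2 * (fpa p (-1)) ^ 2).coeff x = cf [2,1,1,-1,-1] x p := by
  rw [cf, show (fpa p 2) * (fpa p 1) ^ 2 * (fpa p (-1)) ^ 2 =
    (([2,1,1,-1,-1] : List ℤ).map (fpa p)).prod by
      simp only [List.map_cons, List.map_nil, List.prod_cons, List.prod_nil]; ring]

lemma d3 : ((fpa p 2) * (fpa p (-2)) * (fpa p 1) ^ 2 * (fpa p (-1))).coeff x =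
    cf [2,-2,1,1,-1] x p := by
  rw [cf, show (fpa p 2) * (fpa p (-2)) * (fpa p 1) ^ 2 * (fpa p (-1)) =
    (([2,-2,1,1,-1] : List ℤ).map (fpa p)).prod by
      simp only [List.map_cons, List.map_nil, List.prod_cons, List.prod_nil]; ring]

lemma d4 : ((fpa p 1) ^ 2 * (fpa p (-1)) ^ 4).coeff x = cf [1,1,-1,-1,-1,-1] x p := by
  rw [cf, show (fpa p 1) ^ 2 * (fpa p (-1)) ^ 4 =
    (([1,1,-1,-1,-1,-1] : List ℤ).map (fpa p)).prod by
      simp only [List.map_cons, List.map_nil, List.prod_cons, List.prod_nil]; ring]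

lemma d5 : ((fpa p 2) * (fpa p 1) * (fpa p (-1)) ^ 4).coeff x = cf [2,1,-1,-1,-1,-1] x p := by
  rw [cf, show (fpa p 2) * (fpa p 1) * (fpa p (-1)) ^ 4 =
    (([2,1,-1,-1,-1,-1] : List ℤ).map (fpa p)).prod by
      simp only [List.map_cons, List.map_nil, List.prod_cons, List.prod_nil]; ring]

lemma d6 : ((fpa p 2) * (fpa p 1) ^ 2 * (fpa p (-1)) ^ 3).coeff x = cf [2,1,1,-1,-1,-1] x p := by
  rw [cf, show (fpa p 2) * (fpa p 1) ^ 2 * (fpa p (-1)) ^ 3 =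
    (([2,1,1,-1,-1,-1] : List ℤ).map (fpa p)).prod by
      simp only [List.map_cons, List.map_nil, List.prod_cons, List.prod_nil]; ring]

lemma d7 : ((fpa p 1) ^ 4 * (fpa p (-1)) ^ 3).coeff x = cf [1,1,1,1,-1,-1,-1] x p := by
  rw [cf, show (fpa p 1) ^ 4 * (fpa p (-1)) ^ 3 =
    (([1,1,1,1,-1,-1,-1] : List ℤ).map (fpa p)).prod by
      simp only [List.map_cons, List.map_nil, List.prod_cons, List.prod_nil]; ring]

end coeffs

end Stmt11Aux

/-- `w₁ = C(γ,2)C(κ,2)`. -/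
noncomputable def w1 (γ κ : ℕ) : ℝ := (γ.choose 2 * κ.choose 2 : ℕ)

/-- `w₂ = 3C(γ,2)C(κ,3) + 3C(γ,3)C(κ,2)`. -/
noncomputable def w2 (γ κ : ℕ) : ℝ :=
  (3 * (γ.choose 2 * κ.choose 3) + 3 * (γ.choose 3 * κ.choose 2) : ℕ)

/-- `w₃ = 18C(γ,3)C(κ,3)`. -/
noncomputable def w3 (γ κ : ℕ) : ℝ := (18 * (γ.choose 3 * κ.choose 3) : ℕ)

/-- `w₄ = 6C(γ,2)C(κ,4) + 6C(γ,4)C(κ,2) + 36C(γ,3)C(κ,4) + 36C(γ,4)C(κ,3) + 72C(γ,4)C(κ,4)`. -/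
noncomputable def w4 (γ κ : ℕ) : ℝ :=
  (6 * (γ.choose 2 * κ.choose 4) + 6 * (γ.choose 4 * κ.choose 2) +
    36 * (γ.choose 3 * κ.choose 4) + 36 * (γ.choose 4 * κ.choose 3) +
    72 * (γ.choose 4 * κ.choose 4) : ℕ)

/-- `N₈(p)`: the expected number of cycle-8 candidates in the MD protograph. -/
noncomputable def N8 (m M γ κ : ℕ) (p : Fin (m + 1) × Fin M → ℝ) : ℝ :=
  ∑ᶠ (b : ℤ) (_ : (M : ℤ) ∣ b),
    (w1 γ κ * ((fpa p 2) ^ 2 * (fpa p (-2)) ^ 2).coeff (0, b) +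
     w2 γ κ * ((fpa p 2) * (fpa p (-2)) * (fpa p 1) ^ 2 * (fpa p (-1)) ^ 2).coeff (0, b) +
     w3 γ κ * ((fpa p 2) * (fpa p 1) ^ 2 * (fpa p (-1)) ^ 4).coeff (0, b) +
     w4 γ κ * ((fpa p 1) ^ 4 * (fpa p (-1)) ^ 4).coeff (0, b))

open Stmt11Aux

/-- `N₈` is differentiable everywhere, and the formula for its partial
derivative with respect to the coordinate `p(i,j)`. -/
theorem stmt11 {m M γ κ : ℕ} (hm : 1 ≤ m) (hM : 2 ≤ M) (hγ : 4 ≤ γ) (hκ : 4 ≤ κ) :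
    Differentiable ℝ (N8 m M γ κ) ∧
    ∀ (p : Fin (m + 1) × Fin M → ℝ) (i : Fin (m + 1)) (j : Fin M),
      fderiv ℝ (N8 m M γ κ) p (Pi.single (i, j) 1) =
        ∑ᶠ (b : ℤ) (_ : (M : ℤ) ∣ b),
          (4 * w1 γ κ * ((fpa p 2) ^ 2 * (fpa p (-2))).coeff (2 * (i : ℤ), b + 2 * (j : ℤ)) +
           2 * w2 γ κ *
             ((fpa p 2) * (fpa p 1) ^ 2 * (fpa p (-1)) ^ 2).coeff (2 * (i : ℤ), b + 2 * (j : ℤ)) +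
           4 * w2 γ κ *
             ((fpa p 2) * (fpa p (-2)) * (fpa p 1) ^ 2 * (fpa p (-1))).coeff ((i : ℤ), b + (j : ℤ)) +
           w3 γ κ * ((fpa p 1) ^ 2 * (fpa p (-1)) ^ 4).coeff (-(2 * (i : ℤ)), b - 2 * (j : ℤ)) +
           2 * w3 γ κ *
             ((fpa p 2) * (fpa p 1) * (fpa p (-1)) ^ 4).coeff (-(i : ℤ), b - (j : ℤ)) +
           4 * w3 γ κ *
             ((fpa p 2) * (fpa p 1) ^ 2 * (fpa p (-1)) ^ 3).coeff ((i : ℤ), b + (j : ℤ)) +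
           8 * w4 γ κ * ((fpa p 1) ^ 4 * (fpa p (-1)) ^ 3).coeff ((i : ℤ), b + (j : ℤ))) := by
  classical
  have hN8eq : N8 m M γ κ = fun q => ∑ b ∈ Finset.Icc (-(8 * (M:ℤ))) (8 * (M:ℤ)),
      if (M : ℤ) ∣ b then
        (w1 γ κ * cf [2,2,-2,-2] (0, b) q + w2 γ κ * cf [2,-2,1,1,-1,-1] (0, b) q +
         w3 γ κ * cf [2,1,1,-1,-1,-1,-1] (0, b) q +
         w4 γ κ * cf [1,1,1,1,-1,-1,-1,-1] (0, b) q)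
      else 0 := by
    funext q
    simp only [N8, c1, c2, c3, c4]
    refine finsum_dvd_eq_sum _ fun b hb => ?_
    rw [cf_bound [2,2,-2,-2] (0, b) q (by norm_num; linarith),
        cf_bound [2,-2,1,1,-1,-1] (0, b) q (by norm_num; linarith),
        cf_bound [2,1,1,-1,-1,-1,-1] (0, b) q (by norm_num; linarith),
        cf_bound [1,1,1,1,-1,-1,-1,-1] (0, b) q (by norm_num; linarith)]
    ring
  constructor
  · rw [hN8eq]
    apply Differentiable.fun_sum
    intro b _
    have hd : ∀ (as : List ℤ) (x : ℤ × ℤ),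
        Differentiable ℝ (fun q : Fin (m + 1) × Fin M → ℝ => cf as x q) :=
      fun as x q => (hasFDerivAt_cf as x q).differentiableAt
    by_cases hb : (M : ℤ) ∣ b
    · simp only [if_pos hb]
      exact (((((hd _ _).const_mul _).add ((hd _ _).const_mul _)).add
        ((hd _ _).const_mul _)).add ((hd _ _).const_mul _))
    · simp only [if_neg hb]
      exact differentiable_const 0
  · intro p i j
    have hj : ((j : ℕ) : ℤ) < (M : ℤ) := by exact_mod_cast j.is_lt
    have hj0 : (0:ℤ) ≤ ((j : ℕ) : ℤ) := Int.natCast_nonneg _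
    have hDf : HasFDerivAt (N8 m M γ κ)
        (∑ b ∈ Finset.Icc (-(8 * (M:ℤ))) (8 * (M:ℤ)),
          if (M : ℤ) ∣ b then
            (w1 γ κ • Dcf [2,2,-2,-2] (0, b) p + w2 γ κ • Dcf [2,-2,1,1,-1,-1] (0, b) p +
             w3 γ κ • Dcf [2,1,1,-1,-1,-1,-1] (0, b) p +
             w4 γ κ • Dcf [1,1,1,1,-1,-1,-1,-1] (0, b) p)
          else 0) p := by
      rw [hN8eq]
      apply HasFDerivAt.fun_sum
      intro b _
      by_cases hb : (M : ℤ) ∣ b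
      · simp only [if_pos hb]
        exact ((((hasFDerivAt_cf _ _ p).const_mul _).add
            ((hasFDerivAt_cf _ _ p).const_mul _)).add
            ((hasFDerivAt_cf _ _ p).const_mul _)).add
            ((hasFDerivAt_cf _ _ p).const_mul _)
      · simp only [if_neg hb]
        exact hasFDerivAt_const 0 p
    rw [hDf.fderiv]
    have hRHS : (∑ᶠ (b : ℤ) (_ : (M : ℤ) ∣ b),
          (4 * w1 γ κ * ((fpa p 2) ^ 2 * (fpa p (-2))).coeff (2 * (i : ℤ), b + 2 * (j : ℤ)) +
           2 * w2 γ κ *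
             ((fpa p 2) * (fpa p 1) ^ 2 * (fpa p (-1)) ^ 2).coeff (2 * (i : ℤ), b + 2 * (j : ℤ)) +
           4 * w2 γ κ *
             ((fpa p 2) * (fpa p (-2)) * (fpa p 1) ^ 2 * (fpa p (-1))).coeff ((i : ℤ), b + (j : ℤ)) +
           w3 γ κ * ((fpa p 1) ^ 2 * (fpa p (-1)) ^ 4).coeff (-(2 * (i : ℤ)), b - 2 * (j : ℤ)) +
           2 * w3 γ κ *
             ((fpa p 2) * (fpa p 1) * (fpa p (-1)) ^ 4).coeff (-(i : ℤ), b - (j : ℤ)) +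
           4 * w3 γ κ *
             ((fpa p 2) * (fpa p 1) ^ 2 * (fpa p (-1)) ^ 3).coeff ((i : ℤ), b + (j : ℤ)) +
           8 * w4 γ κ * ((fpa p 1) ^ 4 * (fpa p (-1)) ^ 3).coeff ((i : ℤ), b + (j : ℤ)))) =
        ∑ b ∈ Finset.Icc (-(8 * (M:ℤ))) (8 * (M:ℤ)),
          if (M : ℤ) ∣ b then
            (4 * w1 γ κ * cf [2,2,-2] (2 * (i : ℤ), b + 2 * (j : ℤ)) p +
             2 * w2 γ κ * cf [2,1,1,-1,-1] (2 * (i : ℤ), b + 2 * (j : ℤ)) p +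
             4 * w2 γ κ * cf [2,-2,1,1,-1] ((i : ℤ), b + (j : ℤ)) p +
             w3 γ κ * cf [1,1,-1,-1,-1,-1] (-(2 * (i : ℤ)), b - 2 * (j : ℤ)) p +
             2 * w3 γ κ * cf [2,1,-1,-1,-1,-1] (-(i : ℤ), b - (j : ℤ)) p +
             4 * w3 γ κ * cf [2,1,1,-1,-1,-1] ((i : ℤ), b + (j : ℤ)) p +
             8 * w4 γ κ * cf [1,1,1,1,-1,-1,-1] ((i : ℤ), b + (j : ℤ)) p)
          else 0 := by
      simp only [d1, d2, d3, d4, d5, d6, d7]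
      refine finsum_dvd_eq_sum _ fun b hb => ?_
      rw [cf_bound [2,2,-2] _ p (by
            norm_num
            exact abs_shift (by rw [abs_of_nonneg (by positivity)]; linarith)),
          cf_bound [2,1,1,-1,-1] _ p (by
            norm_num
            exact abs_shift (by rw [abs_of_nonneg (by positivity)]; linarith)),
          cf_bound [2,-2,1,1,-1] _ p (by
            norm_num
            exact abs_shift (by rw [abs_of_nonneg (by positivity)]; linarith)),
          cf_bound [1,1,-1,-1,-1,-1] _ p (by
            norm_num
            exact abs_shift' (by rw [abs_of_nonneg (by positivity)]; linarith)),
          cf_bound [2,1,-1,-1,-1,-1] _ p (by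
            norm_num
            exact abs_shift' (by rw [abs_of_nonneg (by positivity)]; linarith)),
          cf_bound [2,1,1,-1,-1,-1] _ p (by
            norm_num
            exact abs_shift (by rw [abs_of_nonneg (by positivity)]; linarith)),
          cf_bound [1,1,1,1,-1,-1,-1] _ p (by
            norm_num
            exact abs_shift (by rw [abs_of_nonneg (by positivity)]; linarith))]
      ring
    rw [hRHS, ContinuousLinearMap.sum_apply]
    trans (∑ b ∈ Finset.Icc (-(8 * (M:ℤ))) (8 * (M:ℤ)),
      if (M : ℤ) ∣ b then
        ((2 * w1 γ κ * cf [2,2,-2] (2 * (i : ℤ), b + 2 * (j : ℤ)) p +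
          w2 γ κ * cf [2,1,1,-1,-1] (2 * (i : ℤ), b + 2 * (j : ℤ)) p +
          2 * w2 γ κ * cf [2,-2,1,1,-1] ((i : ℤ), b + (j : ℤ)) p +
          w3 γ κ * cf [1,1,-1,-1,-1,-1] (-(2 * (i : ℤ)), b - 2 * (j : ℤ)) p +
          2 * w3 γ κ * cf [2,1,-1,-1,-1,-1] (-(i : ℤ), b - (j : ℤ)) p +
          4 * w3 γ κ * cf [2,1,1,-1,-1,-1] ((i : ℤ), b + (j : ℤ)) p +
          4 * w4 γ κ * cf [1,1,1,1,-1,-1,-1] ((i : ℤ), b + (j : ℤ)) p) +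
         (2 * w1 γ κ * cf [2,2,-2] (2 * (i : ℤ), -b + 2 * (j : ℤ)) p +
          w2 γ κ * cf [2,1,1,-1,-1] (2 * (i : ℤ), -b + 2 * (j : ℤ)) p +
          2 * w2 γ κ * cf [2,-2,1,1,-1] ((i : ℤ), -b + (j : ℤ)) p +
          4 * w4 γ κ * cf [1,1,1,1,-1,-1,-1] ((i : ℤ), -b + (j : ℤ)) p))
      else 0)
    · refine Finset.sum_congr rfl fun b _ => ?_
      by_cases hb : (M : ℤ) ∣ b
      · rw [if_pos hb, if_pos hb]
        simp only [ContinuousLinearMap.add_apply, ContinuousLinearMap.smul_apply,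
          smul_eq_mul, Dcf_single]
        simp [Finset.sum_range_succ]
        rw [flip1 (2 * (i : ℤ)) b (2 * (j : ℤ)) p,
            flip2 (2 * (i : ℤ)) b (2 * (j : ℤ)) p,
            flip3 ((i : ℤ)) b ((j : ℤ)) p,
            flip4 ((i : ℤ)) b ((j : ℤ)) p]
        ring
      · rw [if_neg hb, if_neg hb]
        simp
    trans (∑ b ∈ Finset.Icc (-(8 * (M:ℤ))) (8 * (M:ℤ)),
      if (M : ℤ) ∣ b then
        ((2 * w1 γ κ * cf [2,2,-2] (2 * (i : ℤ), b + 2 * (j : ℤ)) p +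
          w2 γ κ * cf [2,1,1,-1,-1] (2 * (i : ℤ), b + 2 * (j : ℤ)) p +
          2 * w2 γ κ * cf [2,-2,1,1,-1] ((i : ℤ), b + (j : ℤ)) p +
          w3 γ κ * cf [1,1,-1,-1,-1,-1] (-(2 * (i : ℤ)), b - 2 * (j : ℤ)) p +
          2 * w3 γ κ * cf [2,1,-1,-1,-1,-1] (-(i : ℤ), b - (j : ℤ)) p +
          4 * w3 γ κ * cf [2,1,1,-1,-1,-1] ((i : ℤ), b + (j : ℤ)) p +
          4 * w4 γ κ * cf [1,1,1,1,-1,-1,-1] ((i : ℤ), b + (j : ℤ)) p) +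
         (2 * w1 γ κ * cf [2,2,-2] (2 * (i : ℤ), b + 2 * (j : ℤ)) p +
          w2 γ κ * cf [2,1,1,-1,-1] (2 * (i : ℤ), b + 2 * (j : ℤ)) p +
          2 * w2 γ κ * cf [2,-2,1,1,-1] ((i : ℤ), b + (j : ℤ)) p +
          4 * w4 γ κ * cf [1,1,1,1,-1,-1,-1] ((i : ℤ), b + (j : ℤ)) p))
      else 0)
    · exact key_reindex
        (fun b => 2 * w1 γ κ * cf [2,2,-2] (2 * (i : ℤ), b + 2 * (j : ℤ)) p +
          w2 γ κ * cf [2,1,1,-1,-1] (2 * (i : ℤ), b + 2 * (j : ℤ)) p +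
          2 * w2 γ κ * cf [2,-2,1,1,-1] ((i : ℤ), b + (j : ℤ)) p +
          w3 γ κ * cf [1,1,-1,-1,-1,-1] (-(2 * (i : ℤ)), b - 2 * (j : ℤ)) p +
          2 * w3 γ κ * cf [2,1,-1,-1,-1,-1] (-(i : ℤ), b - (j : ℤ)) p +
          4 * w3 γ κ * cf [2,1,1,-1,-1,-1] ((i : ℤ), b + (j : ℤ)) p +
          4 * w4 γ κ * cf [1,1,1,1,-1,-1,-1] ((i : ℤ), b + (j : ℤ)) p)
        (fun c => 2 * w1 γ κ * cf [2,2,-2] (2 * (i : ℤ), c + 2 * (j : ℤ)) p +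
          w2 γ κ * cf [2,1,1,-1,-1] (2 * (i : ℤ), c + 2 * (j : ℤ)) p +
          2 * w2 γ κ * cf [2,-2,1,1,-1] ((i : ℤ), c + (j : ℤ)) p +
          4 * w4 γ κ * cf [1,1,1,1,-1,-1,-1] ((i : ℤ), c + (j : ℤ)) p)
    · refine Finset.sum_congr rfl fun b _ => ?_
      split_ifs with h
      · ring
      · rfl
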